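/- Let d be a positive non-square integer with d ≢ 1 (mod 4), and let √d = [a_0; a_1, a_2, …] be its simple continued fraction expansion, with n-th convergent p_n/q_n = [a_0; a_1, …, a_n] (in lowest terms, with the convention q_{−1} = 0) and n-th total quotient α_n = [a_n; a_{n+1}, a_{n+2}, …]. Set ν_n = |p_n² − d·q_n²|. Then for every n ≥ 0 there is a real number δ_n with α_{n+1} = 2√d/ν_n − q_{n−1}/q_n + δ_n and |δ_n| < 4/(2√d·q_n²); in particular α_{n+1} < 2√d/ν_n for every n ≥ 0. -/

import Mathlib

/-- The `n`-th total quotient `α_n` of the continued fraction expansion of `θ`: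
`α_0 = θ`, `α_{n+1} = 1/(α_n - ⌊α_n⌋)`. -/
noncomputable def cfAlpha (θ : ℝ) : ℕ → ℝ
  | 0 => θ
  | n + 1 => 1 / Int.fract (cfAlpha θ n)

/-- The `n`-th partial quotient `a_n` of the continued fraction expansion of `θ`. -/
noncomputable def cfA (θ : ℝ) (n : ℕ) : ℤ := ⌊cfAlpha θ n⌋

/-- Numerators of the convergents of `θ`, shifted by two:
`cfP θ (n+2) = p_n`, with `p_{-2} = 0`, `p_{-1} = 1`, `p_n = a_n p_{n-1} + p_{n-2}`. -/
noncomputable def cfP (θ : ℝ) : ℕ → ℤ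
  | 0 => 0
  | 1 => 1
  | n + 2 => cfA θ n * cfP θ (n + 1) + cfP θ n

/-- Denominators of the convergents of `θ`, shifted by two:
`cfQ θ (n+2) = q_n`, with `q_{-2} = 1`, `q_{-1} = 0`, `q_n = a_n q_{n-1} + q_{n-2}`. -/
noncomputable def cfQ (θ : ℝ) : ℕ → ℤ
  | 0 => 1
  | 1 => 0
  | n + 2 => cfA θ n * cfQ θ (n + 1) + cfQ θ n

/-- for a positive non-square integer `d` with `d ≢ 1 (mod 4)`,
with `ν_n = |p_n² - d q_n²|`, for every `n ≥ 0` there is `δ_n` with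
`α_{n+1} = 2√d/ν_n - q_{n-1}/q_n + δ_n`, `|δ_n| < 4/(2√d q_n²)`;
in particular `α_{n+1} < 2√d/ν_n`. -/
lemma aux_fract_pos {x : ℝ} (hx : Irrational x) : 0 < Int.fract x := by
  rcases (Int.fract_nonneg x).lt_or_eq with h | h
  · exact h
  · exact absurd (by rw [Int.fract] at h; linarith : x = (⌊x⌋ : ℝ)) (hx.ne_int _)

lemma aux_alpha_irr {θ : ℝ} (hθ : Irrational θ) : ∀ n, Irrational (cfAlpha θ n) := by
  intro n
  induction n with
  | zero => exact hθ
  | succ n ih =>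
      show Irrational (1 / Int.fract (cfAlpha θ n))
      rw [one_div]
      exact ((Irrational.sub_intCast ih ⌊cfAlpha θ n⌋).inv)

lemma aux_alpha_gt_one {θ : ℝ} (hθ : Irrational θ) (n : ℕ) : 1 < cfAlpha θ (n + 1) := by
  show 1 < 1 / Int.fract (cfAlpha θ n)
  have h1 := aux_fract_pos (aux_alpha_irr hθ n)
  have h2 := Int.fract_lt_one (cfAlpha θ n)
  rw [lt_div_iff₀ h1]; linarith

lemma aux_alpha_pos {θ : ℝ} (hθ : Irrational θ) (h0 : 0 < θ) (n : ℕ) : 0 < cfAlpha θ n := by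
  cases n with
  | zero => exact h0
  | succ n => linarith [aux_alpha_gt_one hθ n]

lemma aux_a_ge_one {θ : ℝ} (hθ : Irrational θ) (n : ℕ) : 1 ≤ cfA θ (n + 1) :=
  Int.le_floor.2 (by exact_mod_cast (aux_alpha_gt_one hθ n).le)

lemma aux_E_rec {θ : ℝ} (hθ : Irrational θ) :
    ∀ n, cfAlpha θ n * ((cfP θ (n + 1) : ℝ) - (cfQ θ (n + 1) : ℝ) * θ)
      = -((cfP θ n : ℝ) - (cfQ θ n : ℝ) * θ) := by
  intro n
  induction n with
  | zero => show cfAlpha θ 0 * (((1:ℤ):ℝ) - ((0:ℤ):ℝ) * θ) = -(((0:ℤ):ℝ) - ((1:ℤ):ℝ) * θ)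
            show θ * _ = _; push_cast; ring
  | succ n ih =>
      have hf := aux_fract_pos (aux_alpha_irr hθ n)
      have halg : cfAlpha θ (n + 1) * (Int.fract (cfAlpha θ n)) = 1 := by
        show (1 / Int.fract (cfAlpha θ n)) * _ = 1
        field_simp
      have hfr : Int.fract (cfAlpha θ n) = cfAlpha θ n - (cfA θ n : ℝ) := rfl
      have hP : (cfP θ (n + 2) : ℝ) = (cfA θ n : ℝ) * (cfP θ (n+1) : ℝ) + (cfP θ n : ℝ) := by
        rw [show cfP θ (n+2) = cfA θ n * cfP θ (n + 1) + cfP θ n from rfl]; push_cast; ring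
      have hQ : (cfQ θ (n + 2) : ℝ) = (cfA θ n : ℝ) * (cfQ θ (n+1) : ℝ) + (cfQ θ n : ℝ) := by
        rw [show cfQ θ (n+2) = cfA θ n * cfQ θ (n + 1) + cfQ θ n from rfl]; push_cast; ring
      rw [hfr] at halg
      rw [hP, hQ]
      linear_combination cfAlpha θ (n+1) * ih
        - ((cfP θ (n+1) : ℝ) - (cfQ θ (n+1) : ℝ) * θ) * halg

lemma aux_E_ne {θ : ℝ} (hθ : Irrational θ) (h0 : 0 < θ) :
    ∀ n, (cfP θ n : ℝ) - (cfQ θ n : ℝ) * θ ≠ 0 := by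
  intro n
  induction n with
  | zero => show ((0:ℤ):ℝ) - ((1:ℤ):ℝ) * θ ≠ 0; push_cast; intro h; linarith
  | succ n ih =>
      intro h
      have := aux_E_rec hθ n
      rw [h, mul_zero] at this
      exact ih (by linarith)

lemma aux_E_mul_neg {θ : ℝ} (hθ : Irrational θ) (h0 : 0 < θ) (n : ℕ) :
    ((cfP θ n : ℝ) - (cfQ θ n : ℝ) * θ) * ((cfP θ (n+1) : ℝ) - (cfQ θ (n+1) : ℝ) * θ) < 0 := by
  have h1 := aux_E_rec hθ n
  have h2 := aux_E_ne hθ h0 (n + 1)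
  have h3 := aux_alpha_pos hθ h0 n
  have hv : (cfP θ n : ℝ) - (cfQ θ n : ℝ) * θ
      = -(cfAlpha θ n * ((cfP θ (n+1) : ℝ) - (cfQ θ (n+1) : ℝ) * θ)) := by linarith
  rw [hv]
  nlinarith [mul_pos h3 (mul_self_pos.2 h2)]

lemma aux_E_abs_le_one {θ : ℝ} (hθ : Irrational θ) (h0 : 0 < θ) :
    ∀ n, |(cfP θ (n+1) : ℝ) - (cfQ θ (n+1) : ℝ) * θ| ≤ 1 := by
  intro n
  induction n with
  | zero => show |((1:ℤ):ℝ) - ((0:ℤ):ℝ) * θ| ≤ 1; push_cast; simp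
  | succ n ih =>
      have h1 := aux_E_rec hθ (n + 1)
      have h2 := aux_alpha_gt_one hθ n
      have h3 := abs_nonneg ((cfP θ (n+2) : ℝ) - (cfQ θ (n+2) : ℝ) * θ)
      have : cfAlpha θ (n+1) * |(cfP θ (n + 2) : ℝ) - (cfQ θ (n + 2) : ℝ) * θ|
          = |(cfP θ (n+1) : ℝ) - (cfQ θ (n+1) : ℝ) * θ| := by
        rw [← abs_of_pos (show (0:ℝ) < cfAlpha θ (n+1) by linarith), ← abs_mul, h1, abs_neg]
      nlinarith

lemma aux_E_abs_lt_one {θ : ℝ} (hθ : Irrational θ) (h0 : 0 < θ) (n : ℕ) :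
    |(cfP θ (n+2) : ℝ) - (cfQ θ (n+2) : ℝ) * θ| < 1 := by
  have h1 := aux_E_rec hθ (n + 1)
  have h2 := aux_alpha_gt_one hθ n
  have h3 := aux_E_abs_le_one hθ h0 n
  have h4 := abs_nonneg ((cfP θ (n+2) : ℝ) - (cfQ θ (n+2) : ℝ) * θ)
  have h5 := aux_E_ne hθ h0 (n + 2)
  have habs : (0:ℝ) < |(cfP θ (n+2) : ℝ) - (cfQ θ (n+2) : ℝ) * θ| := abs_pos.2 h5
  have : cfAlpha θ (n+1) * |(cfP θ (n + 2) : ℝ) - (cfQ θ (n + 2) : ℝ) * θ|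
      = |(cfP θ (n+1) : ℝ) - (cfQ θ (n+1) : ℝ) * θ| := by
    rw [← abs_of_pos (show (0:ℝ) < cfAlpha θ (n+1) by linarith), ← abs_mul, h1, abs_neg]
  nlinarith

lemma aux_det (θ : ℝ) : ∀ n : ℕ, cfP θ (n+1) * cfQ θ n - cfP θ n * cfQ θ (n+1) = (-1)^n := by
  intro n
  induction n with
  | zero => simp [cfP, cfQ]
  | succ n ih =>
      have hP : cfP θ (n+2) = cfA θ n * cfP θ (n + 1) + cfP θ n := rfl
      have hQ : cfQ θ (n+2) = cfA θ n * cfQ θ (n + 1) + cfQ θ n := rfl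
      rw [hP, hQ, pow_succ]
      linear_combination (-1 : ℤ) * ih

lemma aux_Q {θ : ℝ} (hθ : Irrational θ) : ∀ n, 1 ≤ cfQ θ (n+2) ∧ 0 ≤ cfQ θ (n+1) := by
  intro n
  induction n with
  | zero => constructor <;> simp [cfQ]
  | succ n ih =>
      refine ⟨?_, by linarith [ih.1]⟩
      have hQ : cfQ θ (n+3) = cfA θ (n+1) * cfQ θ (n + 2) + cfQ θ (n+1) := rfl
      have := aux_a_ge_one hθ n
      nlinarith [ih.1, ih.2]

lemma aux_main {θ q q' e e' α s D dr : ℝ}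
    (h1 : 1 < θ)
    (hA : α * e = -e') (hB : 1 < α) (hC : e' * e < 0)
    (hq : 1 ≤ q) (hq' : 0 ≤ q')
    (hdet : q * e' - q' * e = s)
    (hs2 : s ^ 2 = 1) (hsabs : |s| = 1)
    (hF : |e| < 1)
    (hD : D = e + 2 * q * θ)
    (hν : dr = |e| * D)
    (hcase : (q' = 0 ∧ s = 1) ∨ 1 ≤ q') :
    (α = 2 * θ / dr - q' / q + (-s / (q * D)) ∧
      |(-s / (q * D))| < 4 / (2 * θ * q ^ 2)) ∧ α < 2 * θ / dr := by
  have hq0 : (0:ℝ) < q := by linarith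
  have he0 : e ≠ 0 := by intro h; rw [h, mul_zero] at hC; exact absurd rfl hC.ne
  have he'0 : e' ≠ 0 := by intro h; rw [h, zero_mul] at hC; exact absurd rfl hC.ne
  have he_lb : -1 < e := (abs_lt.1 hF).1
  have hDpos : 1 < D := by nlinarith
  have hD0 : (0:ℝ) < D := by linarith
  have hse' : 0 < s * e' := by
    have key : s * e' = q * (e' * e') - q' * (e' * e) := by linear_combination (-e') * hdet
    rw [key]
    nlinarith [mul_self_pos.2 he'0]
  have hse : s * e < 0 := by
    have key : (s * e') * (s * e) = e' * e := by linear_combination (e' * e) * hs2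
    by_contra h
    push_neg at h
    nlinarith [mul_nonneg hse'.le h]
  have habs_e : |e| = -(s * e) := by
    calc |e| = |s| * |e| := by rw [hsabs, one_mul]
    _ = |s * e| := (abs_mul s e).symm
    _ = -(s * e) := abs_of_neg hse
  have hα : α = -e' / e := by rw [eq_div_iff he0]; linarith
  have hsene : -(s * e) ≠ 0 := by linarith
  have goal1 : α = 2 * θ / dr - q' / q + (-s / (q * D)) := by
    subst hD
    have hs0 : s ≠ 0 := by intro h; rw [h, abs_zero] at hsabs; norm_num at hsabs
    rw [hν, habs_e, hα]
    have hq0' : q ≠ 0 := hq0.ne'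
    have hD0'' : e + 2 * θ * q ≠ 0 := by rw [mul_right_comm]; exact hD0.ne'
    field_simp
    linear_combination (-s * (e + 2 * θ * q)) * hdet - 2 * θ * q * hs2
  refine ⟨⟨goal1, ?_⟩, ?_⟩
  · have habsδ : |(-s / (q * D))| = 1 / (q * D) := by
      rw [abs_div, abs_neg, hsabs, abs_of_pos (mul_pos hq0 hD0)]
    rw [habsδ, div_lt_div_iff₀ (mul_pos hq0 hD0)
      (mul_pos (by linarith : (0:ℝ) < 2 * θ) (pow_pos hq0 2))]
    nlinarith [mul_pos hq0 hq0, mul_lt_mul_of_pos_left he_lb hq0,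
      mul_nonneg (by linarith : (0:ℝ) ≤ θ - 1) (mul_pos hq0 hq0).le]
  · rw [goal1]
    have hδlt : -s / (q * D) < q' / q := by
      rcases hcase with ⟨hq'0, hs1⟩ | hq'1
      · rw [hq'0, hs1, zero_div]
        exact div_neg_of_neg_of_pos (by norm_num) (mul_pos hq0 hD0)
      · rw [div_lt_div_iff₀ (mul_pos hq0 hD0) hq0]
        have hsge : -1 ≤ s := neg_abs_le s |>.trans_eq' (by rw [hsabs])
        nlinarith [mul_nonneg (by linarith : (0:ℝ) ≤ q' - 1) (mul_pos hq0 hD0).le,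
          mul_nonneg (by linarith : (0:ℝ) ≤ 1 + s) hq0.le]
    linarith

theorem stmt_0 (d : ℕ) (hd : 0 < d) (hns : ¬ IsSquare d) (hd4 : d % 4 ≠ 1) (n : ℕ) :
    (∃ δ : ℝ,
        cfAlpha (Real.sqrt d) (n + 1) =
          2 * Real.sqrt d /
              ((|cfP (Real.sqrt d) (n + 2) ^ 2 - (d : ℤ) * cfQ (Real.sqrt d) (n + 2) ^ 2| : ℤ) : ℝ)
            - (cfQ (Real.sqrt d) (n + 1) : ℝ) / (cfQ (Real.sqrt d) (n + 2) : ℝ) + δ ∧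
        |δ| < 4 / (2 * Real.sqrt d * (cfQ (Real.sqrt d) (n + 2) : ℝ) ^ 2)) ∧
    cfAlpha (Real.sqrt d) (n + 1) <
      2 * Real.sqrt d /
        ((|cfP (Real.sqrt d) (n + 2) ^ 2 - (d : ℤ) * cfQ (Real.sqrt d) (n + 2) ^ 2| : ℤ) : ℝ) := by
  have hd2 : 1 < d := by
    rcases Nat.lt_or_ge d 2 with h | h
    · interval_cases d
      exact absurd (⟨1, rfl⟩ : IsSquare 1) hns
    · exact h
  have hθ : Irrational (Real.sqrt d) := irrational_sqrt_natCast_iff.mpr hns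
  have h1 : (1:ℝ) < Real.sqrt d := by
    rw [show (1:ℝ) = Real.sqrt 1 by simp]
    exact Real.sqrt_lt_sqrt (by norm_num) (by exact_mod_cast hd2)
  have h0 : (0:ℝ) < Real.sqrt d := by linarith
  have hθ2 : Real.sqrt d ^ 2 = d := Real.sq_sqrt (by positivity)
  -- abbreviations (plain, no `set`)
  have hA := aux_E_rec hθ (n+1)
  have hB := aux_alpha_gt_one hθ n
  have hC := aux_E_mul_neg hθ h0 (n+1)
  have hq : (1:ℝ) ≤ (cfQ (Real.sqrt d) (n+2) : ℝ) := by exact_mod_cast (aux_Q hθ n).1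
  have hq' : (0:ℝ) ≤ (cfQ (Real.sqrt d) (n+1) : ℝ) := by exact_mod_cast (aux_Q hθ n).2
  have hdet : (cfQ (Real.sqrt d) (n+2) : ℝ) *
        ((cfP (Real.sqrt d) (n+1) : ℝ) - (cfQ (Real.sqrt d) (n+1) : ℝ) * Real.sqrt d)
      - (cfQ (Real.sqrt d) (n+1) : ℝ) *
        ((cfP (Real.sqrt d) (n+2) : ℝ) - (cfQ (Real.sqrt d) (n+2) : ℝ) * Real.sqrt d)
      = (-1:ℝ)^n := by
    have hdZ := aux_det (Real.sqrt d) (n+1)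
    have hdR := congrArg (fun z : ℤ => (z : ℝ)) hdZ
    push_cast at hdR
    linear_combination -hdR
  have hsor : ((-1:ℝ))^n = 1 ∨ ((-1:ℝ))^n = -1 := by
    rcases Nat.even_or_odd n with h | h
    · exact Or.inl h.neg_one_pow
    · exact Or.inr h.neg_one_pow
  have hs2 : (((-1:ℝ))^n) ^ 2 = 1 := by rcases hsor with h | h <;> rw [h] <;> norm_num
  have hsabs : |((-1:ℝ))^n| = 1 := by rcases hsor with h | h <;> rw [h] <;> norm_num
  have hF := aux_E_abs_lt_one hθ h0 n
  have hν : ((|cfP (Real.sqrt d) (n+2) ^ 2 - (d : ℤ) * cfQ (Real.sqrt d) (n+2) ^ 2| : ℤ) : ℝ)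
      = |(cfP (Real.sqrt d) (n+2) : ℝ) - (cfQ (Real.sqrt d) (n+2) : ℝ) * Real.sqrt d| *
        (((cfP (Real.sqrt d) (n+2) : ℝ) - (cfQ (Real.sqrt d) (n+2) : ℝ) * Real.sqrt d)
          + 2 * (cfQ (Real.sqrt d) (n+2) : ℝ) * Real.sqrt d) := by
    have hfac : ((cfP (Real.sqrt d) (n+2) : ℝ))^2 - (d:ℝ) * ((cfQ (Real.sqrt d) (n+2) : ℝ))^2
        = ((cfP (Real.sqrt d) (n+2) : ℝ) - (cfQ (Real.sqrt d) (n+2) : ℝ) * Real.sqrt d)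
          * (((cfP (Real.sqrt d) (n+2) : ℝ) - (cfQ (Real.sqrt d) (n+2) : ℝ) * Real.sqrt d)
            + 2 * (cfQ (Real.sqrt d) (n+2) : ℝ) * Real.sqrt d) := by
      linear_combination ((cfQ (Real.sqrt d) (n+2) : ℝ))^2 * hθ2
    have hDpos : (0:ℝ) < ((cfP (Real.sqrt d) (n+2) : ℝ) - (cfQ (Real.sqrt d) (n+2) : ℝ) * Real.sqrt d)
          + 2 * (cfQ (Real.sqrt d) (n+2) : ℝ) * Real.sqrt d := by
      nlinarith [(abs_lt.1 hF).1]
    push_cast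
    rw [hfac, abs_mul, abs_of_pos hDpos]
  have hcase : ((cfQ (Real.sqrt d) (n+1) : ℝ) = 0 ∧ ((-1:ℝ))^n = 1)
      ∨ (1:ℝ) ≤ (cfQ (Real.sqrt d) (n+1) : ℝ) := by
    rcases n with _ | m
    · exact Or.inl ⟨by norm_num [cfQ], by norm_num⟩
    · exact Or.inr (by exact_mod_cast (aux_Q hθ m).1)
  obtain ⟨⟨g1, g2⟩, g3⟩ := aux_main h1 hA hB hC hq hq' hdet hs2 hsabs hF rfl hν hcase
  exact ⟨⟨_, g1, g2⟩, g3⟩
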